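/- arXiv:2312.04269 — 4 statements merged into one kernel-verified Lean document; each statement's English description precedes it below -/
import Mathlib

section
/- Let F : (a,b) → ℝ be differentiable with F' monotonic on (a,b) and either F'(x) ≥ m > 0 for all x ∈ (a,b) or F'(x) ≤ −m < 0 for all x ∈ (a,b). Then |∫_a^b e^{iF(x)} dx| ≤ 4/m. -/
open MeasureTheory Set
set_option maxHeartbeats 1000000

lemma abel_ineq (c d M K : ℝ) (hcd : c ≤ d) (hM : 0 ≤ M) (h : ℝ → ℝ) (u : ℝ → ℂ)
    (hmeas : Measurable h)
    (hmono : MonotoneOn h (Set.Ioc c d) ∨ AntitoneOn h (Set.Ioc c d))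
    (hh0 : ∀ x ∈ Set.Ioc c d, 0 ≤ h x) (hhM : ∀ x ∈ Set.Ioc c d, h x ≤ M)
    (hu : MeasureTheory.IntegrableOn u (Set.Ioc c d))
    (hK : ∀ p ∈ Set.Icc c d, ∀ q ∈ Set.Icc c d, ‖∫ x in p..q, u x‖ ≤ K) :
    ‖∫ x in c..d, h x • u x‖ ≤ M * K := by
  have hK0 : 0 ≤ K := by
    have := hK c (by constructor <;> simp [hcd, le_refl]) c (by constructor <;> simp [hcd, le_refl])
    simpa using this
  set μ : Measure ℝ := volume.restrict (Set.Ioc c d) with hμ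
  set ν : Measure ℝ := volume.restrict (Set.Ioc 0 M) with hν
  haveI : IsFiniteMeasure ν := ⟨by
    rw [hν, Measure.restrict_apply_univ]; exact measure_Ioc_lt_top⟩
  set D : Set (ℝ × ℝ) := {p | p.2 < h p.1} with hD
  have hDmeas : MeasurableSet D := measurableSet_lt measurable_snd (hmeas.comp measurable_fst)
  set Φ : ℝ × ℝ → ℂ := D.indicator (fun p => u p.1) with hΦ
  have hbase : Integrable (fun p : ℝ × ℝ => u p.1) (μ.prod ν) := by
    refine (integrable_prod_iff (hu.aestronglyMeasurable.comp_fst)).2 ⟨?_, ?_⟩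
    · exact Filter.Eventually.of_forall fun x => (integrable_const (u x) : Integrable (fun _ : ℝ => u x) ν)
    · simp only [MeasureTheory.integral_const, smul_eq_mul]
      exact (hu.norm.const_mul _)
  have hΦint : Integrable Φ (μ.prod ν) := hbase.indicator hDmeas
  -- inner integral in t
  have inner_eq : ∀ x ∈ Set.Ioc c d, (∫ t, Φ (x, t) ∂ν) = h x • u x := by
    intro x hx
    have : (fun t => Φ (x, t)) = (Set.Iio (h x)).indicator (fun _ => u x) := by
      funext t
      simp only [hΦ, hD, Set.indicator, Set.mem_setOf_eq, Set.mem_Iio]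
    rw [this, integral_indicator_const _ measurableSet_Iio]
    have : ν (Set.Iio (h x)) = ENNReal.ofReal (h x) := by
      rw [hν, Measure.restrict_apply measurableSet_Iio]
      have : Set.Iio (h x) ∩ Set.Ioc 0 M = Set.Ioo 0 (h x) := by
        ext t
        constructor
        · rintro ⟨h1, h2, h3⟩; exact ⟨h2, h1⟩
        · rintro ⟨h1, h2⟩; exact ⟨h2, h1, le_trans h2.le (hhM x hx)⟩
      rw [this, Real.volume_Ioo, sub_zero]
    rw [measureReal_def, this, ENNReal.toReal_ofReal (hh0 x hx)]
  have lhs_eq : (∫ x, (∫ t, Φ (x, t) ∂ν) ∂μ) = ∫ x in c..d, h x • u x := by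
    rw [intervalIntegral.integral_of_le hcd]
    refine setIntegral_congr_ae measurableSet_Ioc ?_
    exact Filter.Eventually.of_forall fun x hx => inner_eq x hx
  -- bound the swapped integral
  have key : ∀ t ∈ Set.Ioc 0 M, ‖∫ x, Φ (x, t) ∂μ‖ ≤ K := by
    intro t ht
    have hfun : (fun x => Φ (x, t)) = ({x : ℝ | t < h x}).indicator u := by
      funext x
      simp only [hΦ, hD, Set.indicator, Set.mem_setOf_eq]
    have hSmeas : MeasurableSet {x : ℝ | t < h x} := measurableSet_lt measurable_const hmeas
    rw [hfun, integral_indicator hSmeas, hμ, Measure.restrict_restrict hSmeas]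
    set A := {x : ℝ | t < h x} ∩ Set.Ioc c d with hA
    rcases eq_empty_or_nonempty A with hAe | hAne
    · rw [hAe]; simpa using hK0
    · have hAsub : A ⊆ Set.Ioc c d := Set.inter_subset_right
      have hbdd : BddBelow A ∧ BddAbove A :=
        ⟨(bddBelow_Ioc).mono hAsub, (bddAbove_Ioc).mono hAsub⟩
      set p := sInf A with hp
      set q := sSup A with hq
      have hcp : c ≤ p := le_csInf hAne fun x hx => (hAsub hx).1.le
      have hqd : q ≤ d := csSup_le hAne fun x hx => (hAsub hx).2
      have hpq : p ≤ q := csInf_le_csSup hAne hbdd.1 hbdd.2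
      have hsub1 : Set.Ioo p q ⊆ A := by
        intro y hy
        obtain ⟨x1, hx1, hx1y⟩ := exists_lt_of_csInf_lt hAne hy.1
        obtain ⟨x2, hx2, hyx2⟩ := exists_lt_of_lt_csSup hAne hy.2
        have hy1 : y ∈ Set.Ioc c d :=
          ⟨lt_trans (hAsub hx1).1 hx1y, le_trans hyx2.le (hAsub hx2).2⟩
        refine ⟨?_, hy1⟩
        rcases hmono with hm | hm
        · exact lt_of_lt_of_le hx1.1 (hm (hAsub hx1) hy1 hx1y.le)
        · exact lt_of_lt_of_le hx2.1 (hm hy1 (hAsub hx2) hyx2.le)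
      have hsub2 : A ⊆ Set.Icc p q := fun x hx =>
        ⟨csInf_le hbdd.1 hx, le_csSup hbdd.2 hx⟩
      have hae : A =ᵐ[volume] Set.Ioc p q := by
        rw [MeasureTheory.ae_eq_set]
        constructor
        · refine measure_mono_null (fun x hx => ?_) (measure_singleton p)
          rcases hx with ⟨hx1, hx2⟩
          have := hsub2 hx1
          simp only [Set.mem_Ioc, not_and_or, not_lt, not_le] at hx2
          rcases hx2 with h1 | h1
          · exact le_antisymm h1 this.1
          · exact absurd this.2 (not_le.2 h1)
        · refine measure_mono_null (fun x hx => ?_) (measure_singleton q)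
          rcases hx with ⟨hx1, hx2⟩
          have : x ∉ Set.Ioo p q := fun hc => hx2 (hsub1 hc)
          simp only [Set.mem_Ioo, not_and_or, not_lt] at this
          rcases this with h1 | h1
          · exact absurd hx1.1 (not_lt.2 h1)
          · exact le_antisymm hx1.2 h1
      rw [Measure.restrict_congr_set hae]
      have : (∫ x in Set.Ioc p q, u x) = ∫ x in p..q, u x := by
        rw [intervalIntegral.integral_of_le hpq]
      rw [this]
      exact hK p ⟨hcp, le_trans hpq hqd⟩ q ⟨le_trans hcp hpq, hqd⟩
  calc ‖∫ x in c..d, h x • u x‖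
      = ‖∫ t, (∫ x, Φ (x, t) ∂μ) ∂ν‖ := by
        rw [← lhs_eq, ← MeasureTheory.integral_prod _ hΦint,
          MeasureTheory.integral_prod_symm _ hΦint]
    _ ≤ ∫ t, K ∂ν := by
        refine norm_integral_le_of_norm_le (integrable_const K) ?_
        filter_upwards [ae_restrict_mem measurableSet_Ioc] with t ht
        exact key t ht
    _ = M * K := by
        rw [MeasureTheory.integral_const, hν, measureReal_def, Measure.restrict_apply_univ, Real.volume_Ioc,
          sub_zero, ENNReal.toReal_ofReal hM, smul_eq_mul]

lemma norm_exp_I_real (t : ℝ) : ‖Complex.exp (Complex.I * (t : ℂ))‖ = 1 := by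
  rw [Complex.norm_exp]
  simp

lemma key_pos (a b m : ℝ) (hab : a < b) (hm : 0 < m) (F F' : ℝ → ℝ)
    (hderiv : ∀ x ∈ Set.Ioo a b, HasDerivAt F (F' x) x)
    (hmono : MonotoneOn F' (Set.Ioo a b) ∨ AntitoneOn F' (Set.Ioo a b))
    (hbound : ∀ x ∈ Set.Ioo a b, m ≤ F' x) :
    ‖∫ x in a..b, Complex.exp (Complex.I * (F x : ℂ))‖ ≤ 2 / m := by
  set f : ℝ → ℂ := fun x => Complex.exp (Complex.I * (F x : ℂ)) with hf
  have hFcont : ContinuousOn F (Set.Ioo a b) := fun x hx =>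
    (hderiv x hx).continuousAt.continuousWithinAt
  have hfcont : ContinuousOn f (Set.Ioo a b) := by
    apply Complex.continuous_exp.comp_continuousOn
    exact (Complex.continuous_ofReal.comp_continuousOn hFcont).const_smul Complex.I
  -- integrability of f on subintervals of Ioo a b
  have hfint : ∀ s : Set ℝ, MeasurableSet s → s ⊆ Set.Ioo a b →
      MeasureTheory.IntegrableOn f s := by
    intro s hsm hs
    haveI : MeasureTheory.IsFiniteMeasure (MeasureTheory.Measure.restrict volume s) := ⟨by
      rw [MeasureTheory.Measure.restrict_apply_univ]
      exact lt_of_le_of_lt (MeasureTheory.measure_mono hs) measure_Ioo_lt_top⟩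
    refine MeasureTheory.Integrable.mono' (MeasureTheory.integrable_const 1)
      ((hfcont.aestronglyMeasurable measurableSet_Ioo).mono_measure
        (MeasureTheory.Measure.restrict_mono hs le_rfl)) ?_
    exact Filter.Eventually.of_forall fun x => (norm_exp_I_real (F x)).le
  -- main subinterval estimate
  have main : ∀ c d : ℝ, a < c → c < d → d < b → ‖∫ x in c..d, f x‖ ≤ 2 / m := by
    intro c d hac hcd hdb
    have hIcc : Set.Icc c d ⊆ Set.Ioo a b := fun x hx => ⟨lt_of_lt_of_le hac hx.1,
      lt_of_le_of_lt hx.2 hdb⟩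
    set cl : ℝ → ℝ := fun x => max c (min d x) with hcl
    have hclmem : ∀ x, cl x ∈ Set.Icc c d := fun x =>
      ⟨le_max_left _ _, max_le hcd.le (min_le_left _ _)⟩
    have hclid : ∀ x ∈ Set.Icc c d, cl x = x := by
      intro x hx
      simp only [hcl]
      rw [min_eq_right hx.2, max_eq_right hx.1]
    have hclmono : Monotone cl := fun x y hxy =>
      max_le_max le_rfl (min_le_min le_rfl hxy)
    set h : ℝ → ℝ := fun x => (F' (cl x))⁻¹ with hh
    set u : ℝ → ℂ := fun x => f x * (Complex.I * (F' (cl x) : ℂ)) with hu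
    have hmcl : ∀ x, m ≤ F' (cl x) := fun x => hbound _ (hIcc (hclmem x))
    have hpos : ∀ x, 0 < F' (cl x) := fun x => lt_of_lt_of_le hm (hmcl x)
    -- derivative of f
    have hder : ∀ x ∈ Set.Icc c d, HasDerivAt f (u x) x := by
      intro x hx
      have h1 : HasDerivAt (fun y : ℝ => Complex.I * ((F y : ℂ))) (Complex.I * (F' x : ℂ)) x :=
        ((hderiv x (hIcc hx)).ofReal_comp).const_mul Complex.I
      have h2 := h1.cexp
      rw [hu]
      simp only [hclid x hx]
      exact h2
    -- monotonicity of F' ∘ cl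
    have hF'cl : Monotone (fun x => F' (cl x)) ∨ Antitone (fun x => F' (cl x)) := by
      rcases hmono with hmo | hmo
      · exact Or.inl fun x y hxy => hmo (hIcc (hclmem x)) (hIcc (hclmem y)) (hclmono hxy)
      · exact Or.inr fun x y hxy => hmo (hIcc (hclmem x)) (hIcc (hclmem y)) (hclmono hxy)
    have hhmono : Monotone h ∨ Antitone h := by
      rcases hF'cl with hmo | hmo
      · exact Or.inr fun x y hxy => inv_anti₀ (hpos x) (hmo hxy)
      · exact Or.inl fun x y hxy => inv_anti₀ (hpos y) (hmo hxy)
    have hhmeas : Measurable h := by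
      rcases hhmono with hmo | hmo
      · exact hmo.measurable
      · exact hmo.measurable
    -- integrability of u on Icc c d
    have hF'clmeas : Measurable (fun x => F' (cl x)) := by
      rcases hF'cl with hmo | hmo
      · exact hmo.measurable
      · exact hmo.measurable
    have huint : MeasureTheory.IntegrableOn u (Set.Icc c d) := by
      have hB : ∀ x, ‖u x‖ ≤ max (F' c) (F' d) := by
        intro x
        have : ‖u x‖ = F' (cl x) := by
          rw [hu]
          simp only [hf, norm_mul, norm_exp_I_real (F x), Complex.norm_real, Real.norm_eq_abs,
            Complex.norm_I, one_mul]
          rw [abs_of_pos (hpos x)]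
        rw [this]
        rcases hmono with hmo | hmo
        · exact le_trans (hmo (hIcc (hclmem x)) (hIcc (Set.right_mem_Icc.2 hcd.le))
            (hclmem x).2) (le_max_right _ _)
        · exact le_trans (hmo (hIcc (Set.left_mem_Icc.2 hcd.le)) (hIcc (hclmem x))
            (hclmem x).1) (le_max_left _ _)
      haveI : MeasureTheory.IsFiniteMeasure (MeasureTheory.Measure.restrict volume
          (Set.Icc c d)) := ⟨by
        rw [MeasureTheory.Measure.restrict_apply_univ]; exact measure_Icc_lt_top⟩
      have hfm : MeasureTheory.AEStronglyMeasurable f (volume.restrict (Set.Icc c d)) :=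
        (hfcont.aestronglyMeasurable measurableSet_Ioo).mono_measure
          (MeasureTheory.Measure.restrict_mono hIcc le_rfl)
      have hgm : MeasureTheory.AEStronglyMeasurable
          (fun x => Complex.I * ((F' (cl x) : ℝ) : ℂ)) (volume.restrict (Set.Icc c d)) :=
        ((Complex.measurable_ofReal.comp hF'clmeas).const_mul Complex.I).aestronglyMeasurable
      refine MeasureTheory.Integrable.mono'
        (MeasureTheory.integrable_const (max (F' c) (F' d))) (hfm.mul hgm) ?_
      exact Filter.Eventually.of_forall hB
    -- the FTC bound
    have hK : ∀ p ∈ Set.Icc c d, ∀ q ∈ Set.Icc c d, ‖∫ x in p..q, u x‖ ≤ 2 := by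
      intro p hp q hq
      have huIcc : Set.uIcc p q ⊆ Set.Icc c d := Set.uIcc_subset_Icc hp hq
      have hii : IntervalIntegrable u volume p q := by
        rw [intervalIntegrable_iff]
        exact huint.mono_set ((Set.Ioc_subset_Icc_self).trans huIcc)
      rw [intervalIntegral.integral_eq_sub_of_hasDerivAt
        (fun x hx => hder x (huIcc hx)) hii]
      calc ‖f q - f p‖ ≤ ‖f q‖ + ‖f p‖ := norm_sub_le _ _
        _ = 2 := by rw [hf]; rw [norm_exp_I_real, norm_exp_I_real]; norm_num
    have habel := abel_ineq c d m⁻¹ 2 hcd.le (by positivity) h u hhmeas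
      (hhmono.imp (fun hmo => hmo.monotoneOn _) (fun hmo => hmo.antitoneOn _))
      (fun x _ => (inv_pos.2 (hpos x)).le)
      (fun x _ => inv_anti₀ hm (hmcl x))
      (huint.mono_set Set.Ioc_subset_Icc_self) hK
    have heq : (∫ x in c..d, h x • u x) = (∫ x in c..d, f x) * Complex.I := by
      rw [← intervalIntegral.integral_mul_const]
      refine intervalIntegral.integral_congr ?_
      intro x hx
      rw [Set.uIcc_of_le hcd.le] at hx
      have hne : ((F' x : ℝ) : ℂ) ≠ 0 := by
        have := lt_of_lt_of_le hm (hbound x (hIcc hx))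
        exact_mod_cast ne_of_gt this
      simp only [hh, hu, hclid x hx, Complex.real_smul, Complex.ofReal_inv]
      field_simp
    have : ‖∫ x in c..d, f x‖ = ‖∫ x in c..d, h x • u x‖ := by
      rw [heq, norm_mul, Complex.norm_I, mul_one]
    rw [this]
    calc ‖∫ x in c..d, h x • u x‖ ≤ m⁻¹ * 2 := habel
      _ = 2 / m := by ring
  -- epsilon argument
  have hint_ab : MeasureTheory.IntegrableOn f (Set.Ioc a b) := by
    have hre : volume.restrict (Set.Ioc a b) = volume.restrict (Set.Ioo a b) :=
      (MeasureTheory.Measure.restrict_congr_set MeasureTheory.Ioo_ae_eq_Ioc).symm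
    rw [MeasureTheory.IntegrableOn, hre]
    exact hfint _ measurableSet_Ioo le_rfl
  have hii : ∀ p q : ℝ, a ≤ p → p ≤ q → q ≤ b → IntervalIntegrable f volume p q := by
    intro p q h1 h2 h3
    rw [intervalIntegrable_iff_integrableOn_Ioc_of_le h2]
    exact hint_ab.mono_set (Set.Ioc_subset_Ioc h1 h3)
  refine le_of_forall_sub_le ?_
  intro ε hε
  rw [sub_le_iff_le_add]
  set δ := min (ε/2) ((b-a)/4) with hδdef
  have hδ0 : 0 < δ := lt_min (by linarith) (by linarith)
  have hδ1 : δ ≤ ε/2 := min_le_left _ _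
  have hδ2 : δ ≤ (b-a)/4 := min_le_right _ _
  set c := a + δ with hcdef
  set d := b - δ with hddef
  have hac : a < c := by simp only [hcdef]; linarith
  have hcd : c < d := by simp only [hcdef, hddef]; linarith
  have hdb : d < b := by simp only [hddef]; linarith
  have h1 : (∫ x in a..c, f x) + (∫ x in c..b, f x) = ∫ x in a..b, f x :=
    intervalIntegral.integral_add_adjacent_intervals
      (hii a c le_rfl hac.le (by linarith)) (hii c b hac.le (by linarith) le_rfl)
  have h2 : (∫ x in c..d, f x) + (∫ x in d..b, f x) = ∫ x in c..b, f x :=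
    intervalIntegral.integral_add_adjacent_intervals
      (hii c d hac.le hcd.le hdb.le) (hii d b (by linarith) hdb.le le_rfl)
  have e1 : ‖∫ x in a..c, f x‖ ≤ 1 * |c - a| :=
    intervalIntegral.norm_integral_le_of_norm_le_const
      (fun x _ => (norm_exp_I_real (F x)).le)
  have e2 : ‖∫ x in d..b, f x‖ ≤ 1 * |b - d| :=
    intervalIntegral.norm_integral_le_of_norm_le_const
      (fun x _ => (norm_exp_I_real (F x)).le)
  have e3 := main c d hac hcd hdb
  have hca : |c - a| = δ := by rw [hcdef]; simp [abs_of_pos hδ0]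
  have hbd : |b - d| = δ := by rw [hddef]; simp [abs_of_pos hδ0]
  rw [hca] at e1
  rw [hbd] at e2
  calc ‖∫ x in a..b, f x‖ = ‖(∫ x in a..c, f x) + ((∫ x in c..d, f x)
        + (∫ x in d..b, f x))‖ := by rw [h2, h1]
    _ ≤ ‖∫ x in a..c, f x‖ + (‖∫ x in c..d, f x‖ + ‖∫ x in d..b, f x‖) :=
        le_trans (norm_add_le _ _) (by gcongr; exact norm_add_le _ _)
    _ ≤ 1 * δ + (2/m + 1 * δ) := by gcongr
    _ ≤ 2/m + ε := by linarith

theorem stmt_4 (a b m : ℝ) (hab : a < b) (hm : 0 < m) (F F' : ℝ → ℝ)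
    (hderiv : ∀ x ∈ Set.Ioo a b, HasDerivAt F (F' x) x)
    (hmono : MonotoneOn F' (Set.Ioo a b) ∨ AntitoneOn F' (Set.Ioo a b))
    (hbound : (∀ x ∈ Set.Ioo a b, m ≤ F' x) ∨ (∀ x ∈ Set.Ioo a b, F' x ≤ -m)) :
    ‖∫ x in a..b, Complex.exp (Complex.I * (F x : ℂ))‖ ≤ 4 / m := by
  have h24 : (2 : ℝ) / m ≤ 4 / m := by
    gcongr <;> norm_num
  rcases hbound with hb | hb
  · exact le_trans (key_pos a b m hab hm F F' hderiv hmono hb) h24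
  · have hderiv' : ∀ x ∈ Set.Ioo a b, HasDerivAt (fun y => -F y) (-F' x) x :=
      fun x hx => (hderiv x hx).neg
    have hmono' : MonotoneOn (fun x => -F' x) (Set.Ioo a b) ∨
        AntitoneOn (fun x => -F' x) (Set.Ioo a b) := by
      rcases hmono with hmo | hmo
      · exact Or.inr fun x hx y hy hxy => neg_le_neg (hmo hx hy hxy)
      · exact Or.inl fun x hx y hy hxy => neg_le_neg (hmo hx hy hxy)
    have hb' : ∀ x ∈ Set.Ioo a b, m ≤ -F' x := fun x hx => by linarith [hb x hx]
    have key := key_pos a b m hab hm (fun y => -F y) (fun y => -F' y) hderiv' hmono' hb'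
    have hconj : (∫ x in a..b, Complex.exp (Complex.I * ((-F x : ℝ) : ℂ)))
        = starRingEnd ℂ (∫ x in a..b, Complex.exp (Complex.I * (F x : ℂ))) := by
      rw [intervalIntegral.integral_of_le hab.le, intervalIntegral.integral_of_le hab.le,
        ← integral_conj]
      refine MeasureTheory.integral_congr_ae (Filter.Eventually.of_forall fun x => ?_)
      show Complex.exp (Complex.I * ((-F x : ℝ) : ℂ))
          = starRingEnd ℂ (Complex.exp (Complex.I * (F x : ℂ)))
      rw [← Complex.exp_conj]
      congr 1
      simp [Complex.ext_iff]
    rw [hconj] at key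
    rw [RCLike.norm_conj] at key
    exact le_trans key h24
end

section
/- For 1/2 < σ < 1 and 0 < ε < σ − 1/2, there is a constant C(σ, ε) such that for all X ≥ 2, Σ_{m < n ≤ X} 1/(m^{σ−ε} · n^{σ+1−ε} · log(n/m)) ≤ C(σ, ε). -/
set_option maxHeartbeats 1000000 in
theorem stmt_6 (σ ε : ℝ) (hσ1 : 1/2 < σ) (hσ2 : σ < 1) (hε : 0 < ε) (hεσ : ε < σ - 1/2) :
    ∃ C : ℝ, ∀ X : ℝ, 2 ≤ X →
      ∑ n ∈ Finset.Icc 1 ⌊X⌋₊, ∑ m ∈ Finset.Ico 1 n,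
        1 / ((m : ℝ) ^ (σ - ε) * (n : ℝ) ^ (σ + 1 - ε) * Real.log ((n : ℝ) / (m : ℝ)))
      ≤ C := by
  set p : ℝ := σ - ε + 1/2 with hp_def
  have hp : 1 < p := by rw [hp_def]; linarith
  have hf : Summable (fun n : ℕ => 1 / (n:ℝ) ^ p) := by
    rw [Real.summable_one_div_nat_rpow]; exact hp
  have hF : Summable (fun q : ℕ × ℕ => (1 / (q.1:ℝ) ^ p) * (1 / (q.2:ℝ) ^ p)) :=
    hf.mul_of_nonneg hf (fun n => by positivity) (fun n => by positivity)
  refine ⟨∑' q : ℕ × ℕ, (1 / (q.1:ℝ) ^ p) * (1 / (q.2:ℝ) ^ p), fun X hX => ?_⟩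
  set N := ⌊X⌋₊ with hN
  have key : ∀ n ∈ Finset.Icc 1 N, ∀ m ∈ Finset.Ico 1 n,
      1 / ((m : ℝ) ^ (σ - ε) * (n : ℝ) ^ (σ + 1 - ε) * Real.log ((n : ℝ) / (m : ℝ)))
      ≤ (1 / ((m:ℝ)) ^ p) * (1 / (((n - m : ℕ)):ℝ) ^ p) := by
    intro n hn m hm
    obtain ⟨hm1, hmn⟩ := Finset.mem_Ico.mp hm
    have hm1' : (1:ℝ) ≤ (m:ℝ) := by exact_mod_cast hm1
    have hmn' : (m:ℝ) < (n:ℝ) := by exact_mod_cast hmn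
    have hm0 : (0:ℝ) < m := by linarith
    have hn0 : (0:ℝ) < n := by linarith
    have hkc : ((n - m : ℕ):ℝ) = (n:ℝ) - (m:ℝ) := by
      rw [Nat.cast_sub hmn.le]
    set kr : ℝ := ((n - m : ℕ):ℝ) with hkr
    have hk0 : 0 < kr := by rw [hkc]; linarith
    have hkn : kr ≤ (n:ℝ) := by rw [hkc]; linarith
    -- log lower bound
    have hlog1 : Real.log ((m:ℝ)/(n:ℝ)) ≤ (m:ℝ)/(n:ℝ) - 1 :=
      Real.log_le_sub_one_of_pos (div_pos hm0 hn0)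
    have hlogeq : Real.log ((n:ℝ)/(m:ℝ)) = - Real.log ((m:ℝ)/(n:ℝ)) := by
      rw [Real.log_div hn0.ne' hm0.ne', Real.log_div hm0.ne' hn0.ne']; ring
    have hL : kr / (n:ℝ) ≤ Real.log ((n:ℝ)/(m:ℝ)) := by
      rw [hlogeq, hkc]
      have h1 : ((n:ℝ) - m)/n = 1 - (m:ℝ)/n := by field_simp
      rw [h1]; linarith
    have hL0 : 0 < Real.log ((n:ℝ)/(m:ℝ)) := by
      have : 0 < kr / (n:ℝ) := div_pos hk0 hn0
      linarith
    -- denominator bound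
    have e1 : (n:ℝ) ^ (σ + 1 - ε) = (n:ℝ) ^ (σ - ε) * (n:ℝ) := by
      rw [show σ + 1 - ε = (σ - ε) + 1 by ring, Real.rpow_add_one hn0.ne']
    have e2 : (m:ℝ) ^ ((1:ℝ)/2) * kr ^ (σ - ε - 1/2) ≤ (n:ℝ) ^ (σ - ε) := by
      have : (n:ℝ) ^ (σ - ε) = (n:ℝ) ^ ((1:ℝ)/2) * (n:ℝ) ^ (σ - ε - 1/2) := by
        rw [← Real.rpow_add hn0]; ring_nf
      rw [this]
      exact mul_le_mul (Real.rpow_le_rpow hm0.le hmn'.le (by norm_num))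
        (Real.rpow_le_rpow hk0.le hkn (by linarith)) (by positivity) (by positivity)
    have h1 : (m:ℝ) ^ (σ - ε) * (n:ℝ) ^ (σ - ε) * kr ≤
        (m:ℝ) ^ (σ - ε) * (n:ℝ) ^ (σ + 1 - ε) * Real.log ((n:ℝ)/(m:ℝ)) := by
      rw [e1]
      have hpos : (0:ℝ) ≤ (m:ℝ) ^ (σ - ε) * ((n:ℝ) ^ (σ - ε) * n) := by positivity
      calc (m:ℝ) ^ (σ - ε) * (n:ℝ) ^ (σ - ε) * kr
          = ((m:ℝ) ^ (σ - ε) * ((n:ℝ) ^ (σ - ε) * n)) * (kr / n) := by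
            field_simp
        _ ≤ ((m:ℝ) ^ (σ - ε) * ((n:ℝ) ^ (σ - ε) * n)) * Real.log ((n:ℝ)/(m:ℝ)) :=
            mul_le_mul_of_nonneg_left hL hpos
        _ = (m:ℝ) ^ (σ - ε) * ((n:ℝ) ^ (σ - ε) * n) * Real.log ((n:ℝ)/(m:ℝ)) := by ring
    have h2 : (m:ℝ) ^ p * kr ^ p ≤ (m:ℝ) ^ (σ - ε) * (n:ℝ) ^ (σ - ε) * kr := by
      have em : (m:ℝ) ^ p = (m:ℝ) ^ (σ - ε) * (m:ℝ) ^ ((1:ℝ)/2) := by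
        rw [hp_def, Real.rpow_add hm0]
      have ek : kr ^ p = kr ^ (σ - ε - 1/2) * kr := by
        rw [hp_def, show σ - ε + 1/2 = (σ - ε - 1/2) + 1 by ring, Real.rpow_add_one hk0.ne']
      rw [em, ek]
      calc (m:ℝ) ^ (σ - ε) * (m:ℝ) ^ ((1:ℝ)/2) * (kr ^ (σ - ε - 1/2) * kr)
          = ((m:ℝ) ^ (σ - ε) * kr) * ((m:ℝ) ^ ((1:ℝ)/2) * kr ^ (σ - ε - 1/2)) := by ring
        _ ≤ ((m:ℝ) ^ (σ - ε) * kr) * (n:ℝ) ^ (σ - ε) :=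
            mul_le_mul_of_nonneg_left e2 (by positivity)
        _ = (m:ℝ) ^ (σ - ε) * (n:ℝ) ^ (σ - ε) * kr := by ring
    have hden : (m:ℝ) ^ p * kr ^ p ≤
        (m:ℝ) ^ (σ - ε) * (n:ℝ) ^ (σ + 1 - ε) * Real.log ((n:ℝ)/(m:ℝ)) := h2.trans h1
    have hpos : (0:ℝ) < (m:ℝ) ^ p * kr ^ p := by positivity
    calc 1 / ((m:ℝ) ^ (σ - ε) * (n:ℝ) ^ (σ + 1 - ε) * Real.log ((n:ℝ)/(m:ℝ)))
        ≤ 1 / ((m:ℝ) ^ p * kr ^ p) := one_div_le_one_div_of_le hpos hden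
      _ = (1 / (m:ℝ) ^ p) * (1 / kr ^ p) := by ring
  calc ∑ n ∈ Finset.Icc 1 N, ∑ m ∈ Finset.Ico 1 n,
        1 / ((m : ℝ) ^ (σ - ε) * (n : ℝ) ^ (σ + 1 - ε) * Real.log ((n : ℝ) / (m : ℝ)))
      ≤ ∑ n ∈ Finset.Icc 1 N, ∑ m ∈ Finset.Ico 1 n,
        (1 / ((m:ℝ)) ^ p) * (1 / (((n - m : ℕ)):ℝ) ^ p) :=
        Finset.sum_le_sum fun n hn => Finset.sum_le_sum (key n hn)
    _ = ∑ q ∈ (Finset.Icc 1 N).sigma (fun n => Finset.Ico 1 n),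
        (1 / ((q.2 : ℕ):ℝ) ^ p) * (1 / (((q.1 - q.2 : ℕ)):ℝ) ^ p) := Finset.sum_sigma' _ _ _
    _ = ∑ q ∈ ((Finset.Icc 1 N).sigma (fun n => Finset.Ico 1 n)).image
          (fun q : Σ _ : ℕ, ℕ => ((q.2, q.1 - q.2) : ℕ × ℕ)),
        (1 / (q.1:ℝ) ^ p) * (1 / (q.2:ℝ) ^ p) := by
        rw [Finset.sum_image]
        intro q1 hq1 q2 hq2 heq
        obtain ⟨a1, b1⟩ := q1
        obtain ⟨a2, b2⟩ := q2
        simp only [Finset.mem_coe, Finset.mem_sigma, Finset.mem_Icc, Finset.mem_Ico] at hq1 hq2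
        simp only [Prod.mk.injEq] at heq
        have hb : b1 = b2 := heq.1
        have ha : a1 = a2 := by omega
        subst ha; subst hb; rfl
    _ ≤ ∑' q : ℕ × ℕ, (1 / (q.1:ℝ) ^ p) * (1 / (q.2:ℝ) ^ p) :=
        Summable.sum_le_tsum _ (fun q _ => by positivity) hF
end

section
/- Let γ ∈ 𝓕 and m ≠ n positive integers. Then |∫_{max{γ(T), m, n}}^{γ(cT)} (n/m)^{it} (γ⁻¹)'(t) dt| ≤ C · (1/γ'(cT) + (γ⁻¹)'(max{γ(T), m, n})) · 1/|log(n/m)| for an absolute constant C, valid whenever max{γ(T), m, n} < γ(cT). -/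
/-- The class 𝓕 of shift functions: `γ : [T₀,∞) → [T₁,∞)` is a strictly increasing
C² bijection tending to infinity, with monotonic derivative `γ'`, and there exists
`α > 0` with `α·γ(T) ≤ γ'(T)` for all `T ≥ T₀` and `α·T₀ ≤ log γ(T₀)`. -/
def MemF (T₀ T₁ : ℝ) (γ γ' : ℝ → ℝ) : Prop :=
  0 < T₀ ∧ 0 < T₁ ∧
  StrictMonoOn γ (Set.Ici T₀) ∧
  Set.BijOn γ (Set.Ici T₀) (Set.Ici T₁) ∧
  Filter.Tendsto γ Filter.atTop Filter.atTop ∧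
  (∀ T, T₀ ≤ T → HasDerivAt γ (γ' T) T) ∧
  ContDiffOn ℝ 2 γ (Set.Ici T₀) ∧
  (MonotoneOn γ' (Set.Ici T₀) ∨ AntitoneOn γ' (Set.Ici T₀)) ∧
  ∃ α > 0, (∀ T, T₀ ≤ T → α * γ T ≤ γ' T) ∧ α * T₀ ≤ Real.log (γ T₀)

set_option maxHeartbeats 1600000 in
theorem stmt_9 :
    ∃ C : ℝ, 0 < C ∧
      ∀ (T₀ T₁ : ℝ) (γ γ' γinv γinv' : ℝ → ℝ),
        MemF T₀ T₁ γ γ' →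
        (∀ x, T₀ ≤ x → γinv (γ x) = x) →
        (∀ y, T₁ ≤ y → γ (γinv y) = y) →
        (∀ y, T₁ ≤ y → HasDerivAt γinv (γinv' y) y) →
        ∀ (m n : ℕ), 0 < m → 0 < n → m ≠ n →
        ∀ (c T : ℝ), 1 < c → T₀ ≤ T →
        max (γ T) (max (m : ℝ) (n : ℝ)) < γ (c * T) →
        ‖∫ t in max (γ T) (max (m : ℝ) (n : ℝ))..γ (c * T),
            Complex.exp (Complex.I * (t : ℂ) * (Real.log ((n : ℝ) / (m : ℝ)) : ℂ))
              * (γinv' t : ℂ)‖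
          ≤ C * (1 / γ' (c * T) + γinv' (max (γ T) (max (m : ℝ) (n : ℝ))))
              * (1 / |Real.log ((n : ℝ) / (m : ℝ))|) := by
  refine ⟨2, by norm_num, ?_⟩
  intro T₀ T₁ γ γ' γinv γinv' hF hinv1 hinv2 hder m n hm hn hmn c T hc hT hlt
  obtain ⟨hT₀, hT₁, hsm, hbij, -, hdγ, hC2, hmon, α, hα, hαγ, -⟩ := hF
  set θ : ℝ := Real.log ((n : ℝ) / (m : ℝ)) with hθdef
  set a : ℝ := max (γ T) (max (m : ℝ) (n : ℝ)) with hadef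
  set b : ℝ := γ (c * T) with hbdef
  have hm0 : (0:ℝ) < m := by exact_mod_cast hm
  have hn0 : (0:ℝ) < n := by exact_mod_cast hn
  have hθ : θ ≠ 0 := by
    have h1 : (n:ℝ)/(m:ℝ) ≠ 1 := by
      rw [Ne, div_eq_one_iff_eq hm0.ne']
      exact fun h => hmn (by exact_mod_cast h.symm)
    exact Real.log_ne_zero_of_pos_of_ne_one (div_pos hn0 hm0) h1
  have hθabs : (0:ℝ) < |θ| := abs_pos.mpr hθ
  have hγT : T₁ ≤ γ T := hbij.mapsTo hT
  have hT₁a : T₁ ≤ a := le_trans hγT (le_max_left _ _)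
  have hcT : T₀ ≤ c * T := le_trans hT (le_mul_of_one_le_left (le_trans hT₀.le hT) hc.le)
  have hT₁b : T₁ ≤ b := hbij.mapsTo hcT
  have hab : a < b := hlt
  have hinvmem : ∀ y, T₁ ≤ y → T₀ ≤ γinv y := by
    intro y hy
    obtain ⟨x, hx, hxy⟩ := hbij.surjOn hy
    rw [← hxy, hinv1 x hx]; exact hx
  have hγ'pos : ∀ x, T₀ ≤ x → 0 < γ' x := fun x hx =>
    lt_of_lt_of_le (mul_pos hα (lt_of_lt_of_le hT₁ (hbij.mapsTo hx))) (hαγ x hx)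
  have hkey : ∀ y, T₁ ≤ y → γ' (γinv y) * γinv' y = 1 := by
    intro y hy
    have hx : T₀ ≤ γinv y := hinvmem y hy
    have h1 : HasDerivWithinAt (fun z => γ (γinv z)) (γ' (γinv y) * γinv' y) (Set.Ici T₁) y :=
      ((hdγ _ hx).comp y (hder y hy)).hasDerivWithinAt
    have h2 : HasDerivWithinAt (fun z => γ (γinv z)) 1 (Set.Ici T₁) y := by
      have hid : HasDerivWithinAt (fun z : ℝ => z) 1 (Set.Ici T₁) y :=
        (hasDerivAt_id y).hasDerivWithinAt
      exact hid.congr (fun z hz => hinv2 z hz) (hinv2 y hy)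
    exact ((uniqueDiffOn_Ici T₁) y hy).eq_deriv _ h1 h2
  have hγinv'eq : ∀ y, T₁ ≤ y → γinv' y = (γ' (γinv y))⁻¹ := by
    intro y hy
    have h1 := hkey y hy
    field_simp [(hγ'pos _ (hinvmem y hy)).ne'] at h1 ⊢
    linarith
  set A : ℝ := γinv a with hAdef
  set B : ℝ := c * T with hBdef
  have hA0 : T₀ ≤ A := hinvmem a hT₁a
  have hγA : γ A = a := hinv2 a hT₁a
  have hAB : A < B := by
    by_contra h
    push_neg at h
    have := hsm.monotoneOn hcT hA0 h
    rw [hγA] at this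
    exact absurd hab (not_lt.mpr this)
  have hB0 : T₀ ≤ B := hcT
  have hIccsub : Set.Icc A B ⊆ Set.Ici T₀ := fun x hx => le_trans hA0 hx.1
  -- γ' is C¹
  have hUD : UniqueDiffOn ℝ (Set.Ici T₀) := uniqueDiffOn_Ici T₀
  have hdw : ∀ x ∈ Set.Ici T₀, derivWithin γ (Set.Ici T₀) x = γ' x := fun x hx =>
    (hdγ x hx).hasDerivWithinAt.derivWithin (hUD x hx)
  have hγ'C1 : ContDiffOn ℝ 1 γ' (Set.Ici T₀) :=
    (hC2.derivWithin hUD (by norm_num)).congr fun x hx => (hdw x hx).symm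
  set ψ : ℝ → ℝ := fun u => derivWithin γ' (Set.Ici T₀) u with hψdef
  have hψcont : ContinuousOn ψ (Set.Ici T₀) :=
    hγ'C1.continuousOn_derivWithin hUD le_rfl
  have hψd : ∀ u, T₀ < u → HasDerivAt γ' (ψ u) u := fun u hu =>
    ((hγ'C1.differentiableOn one_ne_zero) u (le_of_lt hu)).hasDerivWithinAt.hasDerivAt
      (Ici_mem_nhds hu)
  have hψsign : (∀ u, T₀ < u → 0 ≤ ψ u) ∨ (∀ u, T₀ < u → ψ u ≤ 0) := by
    rcases hmon with hmon | hmon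
    · left
      intro u hu
      have hslope : Filter.Tendsto (slope γ' u) (nhdsWithin u (Set.Ioi u)) (nhds (ψ u)) :=
        (hasDerivAt_iff_tendsto_slope.mp (hψd u hu)).mono_left
          (nhdsWithin_mono u fun z hz => ne_of_gt hz)
      refine ge_of_tendsto hslope ?_
      filter_upwards [self_mem_nhdsWithin] with z hz
      rw [slope_def_field]
      have hz' : u < z := hz
      exact div_nonneg (sub_nonneg.2 (hmon hu.le (hu.le.trans hz'.le) hz'.le))
        (sub_nonneg.2 hz'.le)
    · right
      intro u hu
      have hslope : Filter.Tendsto (slope γ' u) (nhdsWithin u (Set.Ioi u)) (nhds (ψ u)) :=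
        (hasDerivAt_iff_tendsto_slope.mp (hψd u hu)).mono_left
          (nhdsWithin_mono u fun z hz => ne_of_gt hz)
      refine le_of_tendsto hslope ?_
      filter_upwards [self_mem_nhdsWithin] with z hz
      rw [slope_def_field]
      have hz' : u < z := hz
      exact div_nonpos_of_nonpos_of_nonneg
        (sub_nonpos.2 (hmon hu.le (hu.le.trans hz'.le) hz'.le)) (sub_nonneg.2 hz'.le)
  set h' : ℝ → ℝ := fun u => -ψ u / (γ' u) ^ 2 with hh'def
  have hh'd : ∀ u, T₀ < u → HasDerivAt (fun v => (γ' v)⁻¹) (h' u) u := fun u hu => by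
    have hinv := (hψd u hu).inv (hγ'pos u hu.le).ne'
    simp only [hh'def]
    exact hinv
  -- continuities
  have hγcont : ContinuousOn γ (Set.Ici T₀) := hC2.continuousOn
  have hγ'cont : ContinuousOn γ' (Set.Ici T₀) := hγ'C1.continuousOn
  have hhcont : ContinuousOn (fun u => (γ' u)⁻¹) (Set.Ici T₀) :=
    hγ'cont.inv₀ fun x hx => (hγ'pos x hx).ne'
  have hh'cont : ContinuousOn h' (Set.Ici T₀) :=
    (hψcont.neg.div (hγ'cont.pow 2)) fun x hx => (pow_ne_zero 2 (hγ'pos x hx).ne')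
  have hγinvcont : ContinuousOn γinv (Set.Ici T₁) := fun y hy =>
    (hder y hy).continuousAt.continuousWithinAt
  set g : ℝ → ℂ := fun t =>
    Complex.exp (Complex.I * (t : ℂ) * (θ : ℂ)) * ((γinv' t : ℝ) : ℂ) with hgdef
  set E : ℝ → ℂ := fun u => Complex.exp (Complex.I * (γ u : ℂ) * (θ : ℂ)) with hEdef
  have hgcont : ContinuousOn g (Set.Ici T₁) := by
    apply ContinuousOn.mul
    · exact (Complex.continuous_exp.comp (by continuity)).continuousOn
    · apply Complex.continuous_ofReal.comp_continuousOn
      have base : ContinuousOn (fun t => (γ' (γinv t))⁻¹) (Set.Ici T₁) :=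
        hhcont.comp hγinvcont fun y hy => hinvmem y hy
      exact base.congr fun y hy => hγinv'eq y hy
  have hEnorm : ∀ u : ℝ, ‖E u‖ = 1 := by
    intro u
    rw [hEdef]
    simp [Complex.norm_exp]
  -- change of variables
  have huIcc : Set.uIcc A B = Set.Icc A B := Set.uIcc_of_le hAB.le
  have hγB : γ B = b := rfl
  have hcv : (∫ t in a..b, g t) = ∫ u in A..B, E u := by
    have hcv1 := intervalIntegral.integral_comp_smul_deriv' (f := γ) (f' := γ') (g := g)
      (a := A) (b := B)
      (fun x hx => hdγ x (by rw [huIcc] at hx; exact le_trans hA0 hx.1))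
      (hγ'cont.mono (by rw [huIcc]; exact hIccsub))
      (hgcont.mono (by
        intro y hy
        obtain ⟨x, hx, rfl⟩ := hy
        rw [huIcc] at hx
        exact hbij.mapsTo (le_trans hA0 hx.1)))
    rw [hγA, hγB] at hcv1
    rw [← hcv1]
    apply intervalIntegral.integral_congr
    intro x hx
    rw [huIcc] at hx
    have hx0 : T₀ ≤ x := le_trans hA0 hx.1
    have h1 : γinv' (γ x) * γ' x = 1 := by
      have h2 := hkey (γ x) (hbij.mapsTo hx0)
      rwa [hinv1 x hx0, mul_comm] at h2
    have hcast : ((γinv' (γ x) : ℝ) : ℂ) * ((γ' x : ℝ) : ℂ) = 1 := by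
      rw [← Complex.ofReal_mul, h1, Complex.ofReal_one]
    show γ' x • (g ∘ γ) x = E x
    simp only [hgdef, hEdef, Function.comp, Complex.real_smul]
    linear_combination Complex.exp (Complex.I * ((γ x : ℝ) : ℂ) * (θ : ℂ)) * hcast
  -- continuity of E
  have hEcont : ContinuousOn E (Set.Icc A B) := by
    apply Complex.continuous_exp.comp_continuousOn
    exact (continuousOn_const.mul
      (Complex.continuous_ofReal.comp_continuousOn (hγcont.mono hIccsub))).mul continuousOn_const
  -- FTC for h'
  have h'int : IntervalIntegrable h' MeasureTheory.volume A B :=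
    (hh'cont.mono (by rw [huIcc]; exact hIccsub)).intervalIntegrable
  have hFTCh : ∫ u in A..B, h' u = (γ' B)⁻¹ - (γ' A)⁻¹ :=
    intervalIntegral.integral_eq_sub_of_hasDeriv_right_of_le hAB.le (hhcont.mono hIccsub)
      (fun x hx => (hh'd x (lt_of_le_of_lt hA0 hx.1)).hasDerivWithinAt) h'int
  -- main FTC
  set G : ℝ → ℂ := fun u => E u * (((γ' u)⁻¹ : ℝ) : ℂ) / (Complex.I * (θ : ℂ)) with hGdef
  have hθC : ((θ : ℝ) : ℂ) ≠ 0 := by exact_mod_cast hθ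
  have hIθ : (Complex.I * (θ : ℂ)) ≠ 0 := mul_ne_zero Complex.I_ne_zero hθC
  have hGd : ∀ u ∈ Set.Ioo A B,
      HasDerivAt G (E u + E u * ((h' u : ℝ) : ℂ) / (Complex.I * (θ : ℂ))) u := by
    intro u hu
    have hu0 : T₀ < u := lt_of_le_of_lt hA0 hu.1
    have h1 : HasDerivAt (fun v : ℝ => ((γ v : ℝ) : ℂ)) ((γ' u : ℝ) : ℂ) u :=
      (hdγ u hu0.le).ofReal_comp
    have h2 : HasDerivAt (fun v : ℝ => Complex.I * ((γ v : ℝ) : ℂ) * (θ : ℂ))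
        (Complex.I * ((γ' u : ℝ) : ℂ) * (θ : ℂ)) u := (h1.const_mul Complex.I).mul_const _
    have hE' : HasDerivAt E
        (Complex.exp (Complex.I * ((γ u : ℝ) : ℂ) * (θ : ℂ)) *
          (Complex.I * ((γ' u : ℝ) : ℂ) * (θ : ℂ))) u := h2.cexp
    have hH : HasDerivAt (fun v : ℝ => (((γ' v)⁻¹ : ℝ) : ℂ)) ((h' u : ℝ) : ℂ) u :=
      (hh'd u hu0).ofReal_comp
    have hprod := (hE'.mul hH).div_const (Complex.I * (θ : ℂ))
    convert hprod using 1
    case e'_4 => rfl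
    case e'_8 => rfl
    have hg0 : ((γ' u : ℝ) : ℂ) ≠ 0 := by exact_mod_cast (hγ'pos u hu0.le).ne'
    rw [hEdef]
    push_cast
    field_simp
  have hGcont : ContinuousOn G (Set.Icc A B) :=
    (hEcont.mul
      (Complex.continuous_ofReal.comp_continuousOn (hhcont.mono hIccsub))).div_const _
  have hintE : IntervalIntegrable E MeasureTheory.volume A B := by
    apply ContinuousOn.intervalIntegrable; rw [huIcc]; exact hEcont
  have hintEh' : IntervalIntegrable
      (fun u => E u * ((h' u : ℝ) : ℂ) / (Complex.I * (θ : ℂ))) MeasureTheory.volume A B := by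
    apply ContinuousOn.intervalIntegrable; rw [huIcc]
    exact (hEcont.mul
      (Complex.continuous_ofReal.comp_continuousOn (hh'cont.mono hIccsub))).div_const _
  have hFTC : ∫ u in A..B,
      (E u + E u * ((h' u : ℝ) : ℂ) / (Complex.I * (θ : ℂ))) = G B - G A :=
    intervalIntegral.integral_eq_sub_of_hasDeriv_right_of_le hAB.le hGcont
      (fun x hx => (hGd x hx).hasDerivWithinAt) (hintE.add hintEh')
  rw [intervalIntegral.integral_add hintE hintEh'] at hFTC
  have hmain : (∫ u in A..B, E u) =
      G B - G A - ∫ u in A..B, E u * ((h' u : ℝ) : ℂ) / (Complex.I * (θ : ℂ)) :=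
    eq_sub_of_add_eq hFTC
  -- norm computations
  have hGnorm : ∀ u, T₀ ≤ u → ‖G u‖ = (γ' u)⁻¹ / |θ| := by
    intro u hu
    have hpos := hγ'pos u hu
    rw [hGdef]
    simp only [norm_div, norm_mul, hEnorm, Complex.norm_real, Complex.norm_I, one_mul,
      Real.norm_eq_abs]
    rw [abs_of_pos (inv_pos.mpr hpos)]
  have hInt2 : ‖∫ u in A..B, E u * ((h' u : ℝ) : ℂ) / (Complex.I * (θ : ℂ))‖
      ≤ ((γ' A)⁻¹ + (γ' B)⁻¹) / |θ| := by
    rw [intervalIntegral.integral_div, norm_div]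
    have hIθn : ‖Complex.I * ((θ : ℝ) : ℂ)‖ = |θ| := by
      simp [Complex.norm_real]
    rw [hIθn]
    have hABinv : (0:ℝ) ≤ (γ' A)⁻¹ := (inv_pos.mpr (hγ'pos A hA0)).le
    have hBBinv : (0:ℝ) ≤ (γ' B)⁻¹ := (inv_pos.mpr (hγ'pos B hB0)).le
    gcongr
    calc ‖∫ u in A..B, E u * ((h' u : ℝ) : ℂ)‖
        ≤ ∫ u in A..B, ‖E u * ((h' u : ℝ) : ℂ)‖ :=
          intervalIntegral.norm_integral_le_integral_norm hAB.le
      _ = ∫ u in A..B, |h' u| := by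
          apply intervalIntegral.integral_congr
          intro x _
          simp [norm_mul, hEnorm, Complex.norm_real, Real.norm_eq_abs]
      _ ≤ (γ' A)⁻¹ + (γ' B)⁻¹ := by
          rcases hψsign with hs | hs
          · have heq : (∫ u in A..B, |h' u|) = ∫ u in A..B, (-h' u) := by
              apply intervalIntegral.integral_congr_ae
              apply MeasureTheory.ae_of_all
              intro x hx
              rw [Set.uIoc_of_le hAB.le] at hx
              have hx0 : T₀ < x := lt_of_le_of_lt hA0 hx.1
              have hle : h' x ≤ 0 :=
                div_nonpos_of_nonpos_of_nonneg (neg_nonpos.mpr (hs x hx0)) (sq_nonneg _)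
              rw [abs_of_nonpos hle]
            rw [heq, intervalIntegral.integral_neg, hFTCh]
            linarith
          · have heq : (∫ u in A..B, |h' u|) = ∫ u in A..B, h' u := by
              apply intervalIntegral.integral_congr_ae
              apply MeasureTheory.ae_of_all
              intro x hx
              rw [Set.uIoc_of_le hAB.le] at hx
              have hx0 : T₀ < x := lt_of_le_of_lt hA0 hx.1
              have hle : 0 ≤ h' x :=
                div_nonneg (neg_nonneg.mpr (hs x hx0)) (sq_nonneg _)
              rw [abs_of_nonneg hle]
            rw [heq, hFTCh]
            linarith
  -- final assembly
  have hγinv'a : γinv' a = (γ' A)⁻¹ := hγinv'eq a hT₁a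
  have hBval : (1 : ℝ) / γ' (c * T) = (γ' B)⁻¹ := one_div _
  calc ‖∫ t in a..b, g t‖ = ‖∫ u in A..B, E u‖ := by rw [hcv]
    _ = ‖G B - G A - ∫ u in A..B, E u * ((h' u : ℝ) : ℂ) / (Complex.I * (θ : ℂ))‖ := by
        rw [hmain]
    _ ≤ ‖G B‖ + ‖G A‖ + ‖∫ u in A..B, E u * ((h' u : ℝ) : ℂ) / (Complex.I * (θ : ℂ))‖ := by
        have h1 := norm_sub_le (G B - G A)
          (∫ u in A..B, E u * ((h' u : ℝ) : ℂ) / (Complex.I * (θ : ℂ)))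
        have h2 := norm_sub_le (G B) (G A)
        linarith
    _ ≤ (γ' B)⁻¹ / |θ| + (γ' A)⁻¹ / |θ| + ((γ' A)⁻¹ + (γ' B)⁻¹) / |θ| := by
        rw [hGnorm B hB0, hGnorm A hA0]
        linarith [hInt2]
    _ = 2 * ((1 : ℝ) / γ' (c * T) + γinv' a) * (1 / |θ|) := by
        rw [hγinv'a, hBval, hBdef]
        ring
end

section
/- Let (γ₁, ..., γ_r) be admissible and let 𝒫₀ be a finite set of primes. For any tuple of integer vectors (n_{jp})_{1≤j≤r, p∈𝒫₀} not all zero, the normalized integral (1/T)∫_T^{2T} Π_{j=1}^r Π_{p∈𝒫₀} p^{−i n_{jp} γ_j(τ)} dτ tends to 0 as T → ∞. -/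
section Helpers

lemma factorization_prod_pow (s : Finset ℕ) (hs : ∀ p ∈ s, p.Prime) (b : ℕ → ℕ) {q : ℕ}
    (hq : q ∈ s) : (∏ p ∈ s, p ^ b p).factorization q = b q := by
  rw [Nat.factorization_prod (fun p hp => pow_ne_zero _ (hs p hp).pos.ne')]
  rw [Finset.sum_apply']
  rw [Finset.sum_eq_single q]
  · rw [(hs q hq).factorization_pow, Finsupp.single_eq_same]
  · intro p hp hpq
    rw [(hs p hp).factorization_pow, Finsupp.single_eq_of_ne' hpq]
  · intro h; exact absurd hq h

lemma log_prime_indep (s : Finset ℕ) (hs : ∀ p ∈ s, p.Prime) (a : ℕ → ℤ)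
    (h : ∑ p ∈ s, (a p : ℝ) * Real.log p = 0) : ∀ p ∈ s, a p = 0 := by
  set b : ℕ → ℕ := fun p => (a p).toNat with hb
  set c : ℕ → ℕ := fun p => (-(a p)).toNat with hc
  have key : ∀ p, (b p : ℤ) - (c p : ℤ) = a p := by intro p; simp only [hb, hc]; omega
  have hposfact : ∀ p ∈ s, (0:ℝ) < p := fun p hp => by exact_mod_cast (hs p hp).pos
  have hsum : ∑ p ∈ s, (b p : ℝ) * Real.log p = ∑ p ∈ s, (c p : ℝ) * Real.log p := by
    have : ∀ p, (a p : ℝ) = (b p : ℝ) - (c p : ℝ) := by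
      intro p; exact_mod_cast (key p).symm
    simp only [this, sub_mul, Finset.sum_sub_distrib] at h
    linarith
  have hlog : ∀ (e : ℕ → ℕ), ∑ p ∈ s, (e p : ℝ) * Real.log p
      = Real.log ((∏ p ∈ s, p ^ e p : ℕ) : ℝ) := by
    intro e
    push_cast
    rw [Real.log_prod (fun p hp => pow_ne_zero _ (hposfact p hp).ne')]
    refine Finset.sum_congr rfl fun p hp => ?_
    rw [Real.log_pow]
  rw [hlog b, hlog c] at hsum
  have hBpos : (0:ℝ) < ((∏ p ∈ s, p ^ b p : ℕ) : ℝ) := by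
    push_cast
    exact Finset.prod_pos fun p hp => pow_pos (hposfact p hp) _
  have hCpos : (0:ℝ) < ((∏ p ∈ s, p ^ c p : ℕ) : ℝ) := by
    push_cast
    exact Finset.prod_pos fun p hp => pow_pos (hposfact p hp) _
  have hBC : (∏ p ∈ s, p ^ b p) = (∏ p ∈ s, p ^ c p) := by
    have := Real.log_injOn_pos (Set.mem_Ioi.2 hBpos) (Set.mem_Ioi.2 hCpos) hsum
    exact_mod_cast this
  intro p hp
  have h1 : b p = c p := by
    have := congrArg (fun N => N.factorization p) hBC
    simpa [factorization_prod_pow s hs b hp, factorization_prod_pow s hs c hp] using this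
  have := key p
  omega

lemma deriv_nonneg_of_monotoneOn {f : ℝ → ℝ} {T' x d : ℝ} (hx : T' < x)
    (hf : MonotoneOn f (Set.Ioi T')) (hd : HasDerivAt f d x) : 0 ≤ d := by
  have h1 : HasDerivWithinAt f d (Set.Ioi x) x := hd.hasDerivWithinAt
  have h2 := (hasDerivWithinAt_iff_tendsto_slope' (by simp : x ∉ Set.Ioi x)).1 h1
  refine ge_of_tendsto h2 ?_
  filter_upwards [self_mem_nhdsWithin] with y hy
  have hyx : x < y := hy
  have h0 : 0 ≤ (f y - f x) / (y - x) :=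
    div_nonneg (sub_nonneg.2 (hf (Set.mem_Ioi.2 hx) (Set.mem_Ioi.2 (hx.trans hyx)) hyx.le))
      (sub_nonneg.2 hyx.le)
  simpa [slope_def_field] using h0

lemma deriv_nonpos_of_antitoneOn {f : ℝ → ℝ} {T' x d : ℝ} (hx : T' < x)
    (hf : AntitoneOn f (Set.Ioi T')) (hd : HasDerivAt f d x) : d ≤ 0 := by
  have := deriv_nonneg_of_monotoneOn hx hf.neg hd.neg
  linarith

lemma osc_bound (φ f g : ℝ → ℝ) (a b m : ℝ) (hm : 0 < m) (hab : a ≤ b)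
    (hφ : ∀ τ ∈ Set.Icc a b, HasDerivAt φ (f τ) τ)
    (hf : ∀ τ ∈ Set.Icc a b, HasDerivAt f (g τ) τ)
    (hgc : ContinuousOn g (Set.Icc a b))
    (hfm : (∀ τ ∈ Set.Icc a b, m ≤ f τ) ∨ (∀ τ ∈ Set.Icc a b, f τ ≤ -m))
    (hgs : (∀ τ ∈ Set.Icc a b, 0 ≤ g τ) ∨ (∀ τ ∈ Set.Icc a b, g τ ≤ 0)) :
    ‖∫ τ in a..b, Complex.exp (-Complex.I * (φ τ : ℂ))‖ ≤ 3 / m := by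
  have huIcc : Set.uIcc a b = Set.Icc a b := Set.uIcc_of_le hab
  have hfabs : ∀ τ ∈ Set.Icc a b, m ≤ |f τ| := by
    rcases hfm with h | h
    · intro τ hτ; exact (h τ hτ).trans (le_abs_self _)
    · intro τ hτ; have := h τ hτ; rw [abs_of_nonpos (by linarith)]; linarith
  have hfne : ∀ τ ∈ Set.Icc a b, f τ ≠ 0 := by
    intro τ hτ h0
    have := hfabs τ hτ; rw [h0] at this; simp at this; linarith
  have hfneC : ∀ τ ∈ Set.Icc a b, ((f τ : ℝ) : ℂ) ≠ 0 := fun τ hτ =>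
    Complex.ofReal_ne_zero.2 (hfne τ hτ)
  set e : ℝ → ℂ := fun τ => Complex.exp (-Complex.I * (φ τ : ℂ)) with he
  have hede : ∀ τ ∈ Set.Icc a b, HasDerivAt e (Complex.exp (-Complex.I * (φ τ : ℂ)) * (-Complex.I * (f τ : ℂ))) τ := by
    intro τ hτ
    have h1 : HasDerivAt (fun τ => ((φ τ : ℝ) : ℂ)) ((f τ : ℝ) : ℂ) τ := (hφ τ hτ).ofReal_comp
    have h2 : HasDerivAt (fun τ => -Complex.I * ((φ τ : ℝ) : ℂ)) (-Complex.I * (f τ : ℂ)) τ :=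
      h1.const_mul (-Complex.I)
    exact h2.cexp
  have hnorme : ∀ τ, ‖e τ‖ = 1 := by
    intro τ
    have h : -Complex.I * ((φ τ : ℝ) : ℂ) = ((-(φ τ) : ℝ) : ℂ) * Complex.I := by push_cast; ring
    rw [he]; simp only [h]; exact Complex.norm_exp_ofReal_mul_I _
  set G : ℝ → ℂ := fun τ => e τ * (Complex.I * ((f τ : ℝ) : ℂ)⁻¹) with hG
  set E : ℝ → ℂ := fun τ => e τ - Complex.I * (g τ : ℂ) * e τ / ((f τ : ℝ) : ℂ) ^ 2 with hE
  have hGd : ∀ τ ∈ Set.Icc a b, HasDerivAt G (E τ) τ := by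
    intro τ hτ
    have hC : HasDerivAt (fun τ => ((f τ : ℝ) : ℂ)) ((g τ : ℝ) : ℂ) τ := (hf τ hτ).ofReal_comp
    have hinv : HasDerivAt (fun τ => ((f τ : ℝ) : ℂ)⁻¹) (-((g τ : ℝ) : ℂ) / ((f τ : ℝ) : ℂ) ^ 2) τ := by
      have h' := (hasDerivAt_inv (hfneC τ hτ)).comp τ hC
      refine HasDerivAt.congr_deriv h' ?_
      have hne := hfneC τ hτ
      ring
    have h3 := (hede τ hτ).mul (hinv.const_mul Complex.I)
    refine HasDerivAt.congr_deriv (f := G) h3 ?_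
    have hne := hfneC τ hτ
    rw [hE]
    simp only [he, neg_mul]
    field_simp
    ring_nf
    simp [Complex.I_sq]
  have hconte : ContinuousOn e (Set.Icc a b) := fun τ hτ => (hede τ hτ).continuousAt.continuousWithinAt
  have hcontf : ContinuousOn f (Set.Icc a b) := fun τ hτ => (hf τ hτ).continuousAt.continuousWithinAt
  have hcontfC : ContinuousOn (fun τ => ((f τ : ℝ) : ℂ)) (Set.Icc a b) :=
    Complex.continuous_ofReal.comp_continuousOn hcontf
  have hcontgC : ContinuousOn (fun τ => ((g τ : ℝ) : ℂ)) (Set.Icc a b) :=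
    Complex.continuous_ofReal.comp_continuousOn hgc
  have hcontsecond : ContinuousOn (fun τ => Complex.I * (g τ : ℂ) * e τ / ((f τ : ℝ) : ℂ) ^ 2) (Set.Icc a b) :=
    ((continuousOn_const.mul hcontgC).mul hconte).div (hcontfC.pow 2)
      (fun τ hτ => pow_ne_zero _ (hfneC τ hτ))
  have hcontE : ContinuousOn E (Set.Icc a b) := hconte.sub hcontsecond
  have hintE : IntervalIntegrable E MeasureTheory.volume a b := by
    rw [← huIcc] at hcontE; exact hcontE.intervalIntegrable
  have hFTC : ∫ τ in a..b, E τ = G b - G a :=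
    intervalIntegral.integral_eq_sub_of_hasDerivAt (fun τ hτ => hGd τ (huIcc ▸ hτ)) hintE
  have hinte : IntervalIntegrable e MeasureTheory.volume a b := by
    have h' := hconte; rw [← huIcc] at h'; exact h'.intervalIntegrable
  have hintsecond : IntervalIntegrable (fun τ => Complex.I * (g τ : ℂ) * e τ / ((f τ : ℝ) : ℂ) ^ 2) MeasureTheory.volume a b := by
    have h' := hcontsecond; rw [← huIcc] at h'; exact h'.intervalIntegrable
  have hsplit : ∫ τ in a..b, E τ = (∫ τ in a..b, e τ) - ∫ τ in a..b, Complex.I * (g τ : ℂ) * e τ / ((f τ : ℝ) : ℂ) ^ 2 :=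
    intervalIntegral.integral_sub hinte hintsecond
  have hmain : ∫ τ in a..b, e τ = G b - G a + ∫ τ in a..b, Complex.I * (g τ : ℂ) * e τ / ((f τ : ℝ) : ℂ) ^ 2 := by
    rw [← hFTC, hsplit]; ring
  have hGbound : ∀ τ ∈ Set.Icc a b, ‖G τ‖ ≤ 1 / m := by
    intro τ hτ
    rw [hG]
    simp only [norm_mul, hnorme, one_mul, Complex.norm_I, norm_inv, Complex.norm_real,
      Real.norm_eq_abs]
    rw [one_div]
    exact inv_anti₀ hm (hfabs τ hτ)
  have hinvd : ∀ τ ∈ Set.Icc a b, HasDerivAt (fun τ => -(f τ)⁻¹) (g τ / (f τ) ^ 2) τ := by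
    intro τ hτ
    have h' := ((hf τ hτ).inv (hfne τ hτ)).neg
    refine HasDerivAt.congr_deriv h' ?_
    ring
  have hcontq : ContinuousOn (fun τ => g τ / (f τ) ^ 2) (Set.Icc a b) :=
    hgc.div (hcontf.pow 2) (fun τ hτ => pow_ne_zero _ (hfne τ hτ))
  have hintq : IntervalIntegrable (fun τ => g τ / (f τ) ^ 2) MeasureTheory.volume a b := by
    have h' := hcontq; rw [← huIcc] at h'; exact h'.intervalIntegrable
  have hFTC2 : ∫ τ in a..b, g τ / (f τ) ^ 2 = -(f b)⁻¹ - -(f a)⁻¹ :=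
    intervalIntegral.integral_eq_sub_of_hasDerivAt (fun τ hτ => hinvd τ (huIcc ▸ hτ)) hintq
  have ha : a ∈ Set.Icc a b := ⟨le_refl a, hab⟩
  have hbm : b ∈ Set.Icc a b := ⟨hab, le_refl b⟩
  have hainm : |(f a)⁻¹ - (f b)⁻¹| ≤ 1 / m := by
    rw [one_div, abs_sub_le_iff]
    rcases hfm with h | h
    · have h1 := h a ha; have h2 := h b hbm
      have e1 : (f a)⁻¹ ≤ m⁻¹ := inv_anti₀ hm h1
      have e2 : (f b)⁻¹ ≤ m⁻¹ := inv_anti₀ hm h2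
      have e3 : 0 ≤ (f a)⁻¹ := inv_nonneg.2 (by linarith)
      have e4 : 0 ≤ (f b)⁻¹ := inv_nonneg.2 (by linarith)
      constructor <;> linarith
    · have h1 := h a ha; have h2 := h b hbm
      have e1 : (-(f a))⁻¹ ≤ m⁻¹ := inv_anti₀ hm (by linarith)
      have e2 : (-(f b))⁻¹ ≤ m⁻¹ := inv_anti₀ hm (by linarith)
      rw [inv_neg] at e1 e2
      have e3 : (f a)⁻¹ ≤ 0 := inv_nonpos.2 (by linarith)
      have e4 : (f b)⁻¹ ≤ 0 := inv_nonpos.2 (by linarith)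
      constructor <;> linarith
  have hIsub : Set.uIoc a b ⊆ Set.Icc a b := by
    rw [Set.uIoc_of_le hab]; exact Set.Ioc_subset_Icc_self
  have hsecond : ‖∫ τ in a..b, Complex.I * (g τ : ℂ) * e τ / ((f τ : ℝ) : ℂ) ^ 2‖ ≤ 1 / m := by
    rcases hgs with hgp | hgn
    · have hb2 : ‖∫ τ in a..b, Complex.I * (g τ : ℂ) * e τ / ((f τ : ℝ) : ℂ) ^ 2‖
          ≤ |∫ τ in a..b, g τ / (f τ) ^ 2| := by
        apply intervalIntegral.norm_integral_le_abs_of_norm_le _ hintq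
        refine (MeasureTheory.ae_restrict_iff' measurableSet_uIoc).2 (Filter.Eventually.of_forall ?_)
        intro τ hτ
        have hτ' := hIsub hτ
        rw [norm_div, norm_mul, norm_mul]
        simp only [Complex.norm_I, one_mul, hnorme, mul_one, Complex.norm_real, Real.norm_eq_abs,
          norm_pow]
        rw [_root_.abs_of_nonneg (hgp τ hτ'), _root_.sq_abs]
      refine hb2.trans ?_
      rw [hFTC2]
      have heq : -(f b)⁻¹ - -(f a)⁻¹ = (f a)⁻¹ - (f b)⁻¹ := by ring
      rw [heq]
      exact hainm
    · have hb2 : ‖∫ τ in a..b, Complex.I * (g τ : ℂ) * e τ / ((f τ : ℝ) : ℂ) ^ 2‖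
          ≤ |∫ τ in a..b, -(g τ / (f τ) ^ 2)| := by
        apply intervalIntegral.norm_integral_le_abs_of_norm_le _ hintq.neg
        refine (MeasureTheory.ae_restrict_iff' measurableSet_uIoc).2 (Filter.Eventually.of_forall ?_)
        intro τ hτ
        have hτ' := hIsub hτ
        rw [norm_div, norm_mul, norm_mul]
        simp only [Complex.norm_I, one_mul, hnorme, mul_one, Complex.norm_real, Real.norm_eq_abs,
          norm_pow]
        rw [_root_.abs_of_nonpos (hgn τ hτ'), _root_.sq_abs, neg_div]
        simp
      refine hb2.trans ?_
      rw [intervalIntegral.integral_neg, hFTC2]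
      have heq : -(-(f b)⁻¹ - -(f a)⁻¹) = -((f a)⁻¹ - (f b)⁻¹) := by ring
      rw [heq, abs_neg]
      exact hainm
  show ‖∫ τ in a..b, e τ‖ ≤ 3 / m
  rw [hmain]
  have h1 := norm_add_le (G b - G a) (∫ τ in a..b, Complex.I * (g τ : ℂ) * e τ / ((f τ : ℝ) : ℂ) ^ 2)
  have h2 := norm_sub_le (G b) (G a)
  have h3 := hGbound a ha
  have h4 := hGbound b hbm
  have h5 : (3:ℝ) / m = 1/m + 1/m + 1/m := by ring
  linarith

end Helpers


/-- Admissibility of a tuple `(γ₁, …, γ_r)`: for every nonzero `(c₁, …, c_r) ∈ ℝ^r`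
there are `m > 0` and `T' > 0` such that `c₁γ₁' + ⋯ + c_rγ_r'` is monotonic on
`(T', ∞)` and `> m` or `< -m` there. -/
def Admissible (r : ℕ) (γ γ' : Fin r → ℝ → ℝ) : Prop :=
  ∀ c : Fin r → ℝ, c ≠ 0 →
    ∃ m > (0:ℝ), ∃ T' > (0:ℝ),
      (MonotoneOn (fun τ => ∑ j, c j * γ' j τ) (Set.Ioi T') ∨
        AntitoneOn (fun τ => ∑ j, c j * γ' j τ) (Set.Ioi T')) ∧
      ((∀ τ, T' < τ → m < ∑ j, c j * γ' j τ) ∨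
        (∀ τ, T' < τ → (∑ j, c j * γ' j τ) < -m))

theorem stmt_11 (r : ℕ) (T₀ T₁ : ℝ) (γ γ' : Fin r → ℝ → ℝ)
    (hF : ∀ j, MemF T₀ T₁ (γ j) (γ' j))
    (hadm : Admissible r γ γ')
    (P₀ : Finset ℕ) (hP : ∀ p ∈ P₀, p.Prime)
    (n : Fin r → ℕ → ℤ) (hne : ∃ j, ∃ p ∈ P₀, n j p ≠ 0) :
    Filter.Tendsto
      (fun T : ℝ => (1 / (T : ℂ)) *
        ∫ τ in T..2*T, ∏ j, ∏ p ∈ P₀,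
          Complex.exp (-Complex.I * (n j p : ℂ) * (γ j τ : ℂ) * (Real.log p : ℂ)))
      Filter.atTop (nhds 0) := by
  classical
  obtain ⟨j₀, p₀, hp₀, hn₀⟩ := hne
  set c : Fin r → ℝ := fun j => ∑ p ∈ P₀, (n j p : ℝ) * Real.log p with hcdef
  have hcne : c ≠ 0 := by
    intro h0
    refine hn₀ (log_prime_indep P₀ hP (n j₀) ?_ p₀ hp₀)
    have h1 := congrFun h0 j₀
    simpa [hcdef] using h1
  obtain ⟨m, hm, T', hT', hmono, hsign⟩ := hadm c hcne
  set φ : ℝ → ℝ := fun τ => ∑ j, c j * γ j τ with hφdef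
  set f : ℝ → ℝ := fun τ => ∑ j, c j * γ' j τ with hfdef
  have hT₀ : 0 < T₀ := (hF j₀).1
  have hIntEq : ∀ T : ℝ, (∫ τ in T..2*T, ∏ j, ∏ p ∈ P₀,
        Complex.exp (-Complex.I * (n j p : ℂ) * (γ j τ : ℂ) * (Real.log p : ℂ)))
      = ∫ τ in T..2*T, Complex.exp (-Complex.I * (φ τ : ℂ)) := by
    intro T
    refine intervalIntegral.integral_congr fun τ _ => ?_
    calc ∏ j, ∏ p ∈ P₀, Complex.exp (-Complex.I * (n j p : ℂ) * (γ j τ : ℂ) * (Real.log p : ℂ))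
        = ∏ j, Complex.exp (∑ p ∈ P₀,
            -Complex.I * (n j p : ℂ) * (γ j τ : ℂ) * (Real.log p : ℂ)) :=
          Finset.prod_congr rfl fun j _ => (Complex.exp_sum _ _).symm
      _ = Complex.exp (∑ j, ∑ p ∈ P₀,
            -Complex.I * (n j p : ℂ) * (γ j τ : ℂ) * (Real.log p : ℂ)) :=
          (Complex.exp_sum _ _).symm
      _ = Complex.exp (-Complex.I * (φ τ : ℂ)) := by
          congr 1
          simp only [hφdef, hcdef]
          push_cast
          rw [Finset.mul_sum]
          refine Finset.sum_congr rfl fun j _ => ?_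
          rw [Finset.sum_mul, Finset.mul_sum]
          exact Finset.sum_congr rfl fun p _ => by ring
  have hγ'cd : ∀ j, ContDiffOn ℝ 1 (γ' j) (Set.Ici T₀) := by
    intro j
    obtain ⟨-, -, -, -, -, hderiv, hC2, -, -⟩ := hF j
    have h1 : ContDiffOn ℝ 1 (derivWithin (γ j) (Set.Ici T₀)) (Set.Ici T₀) :=
      hC2.derivWithin (uniqueDiffOn_Ici T₀) (by norm_num)
    refine h1.congr fun τ hτ => ?_
    exact ((hderiv τ hτ).hasDerivWithinAt.derivWithin ((uniqueDiffOn_Ici T₀) τ hτ)).symm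
  have hfcd : ContDiffOn ℝ 1 f (Set.Ici T₀) :=
    ContDiffOn.sum fun j _ => contDiffOn_const.mul (hγ'cd j)
  set g : ℝ → ℝ := deriv f with hgdef
  have hfd : ∀ τ, T₀ < τ → HasDerivAt f (g τ) τ := by
    intro τ hτ
    have h1 : ContDiffAt ℝ 1 f τ := hfcd.contDiffAt (Ici_mem_nhds hτ)
    exact (h1.differentiableAt one_ne_zero).hasDerivAt
  have hgc : ContinuousOn g (Set.Ioi T₀) :=
    (hfcd.mono Set.Ioi_subset_Ici_self).continuousOn_deriv_of_isOpen isOpen_Ioi le_rfl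
  have hφd : ∀ τ, T₀ ≤ τ → HasDerivAt φ (f τ) τ := fun τ hτ =>
    HasDerivAt.fun_sum fun j _ => ((hF j).2.2.2.2.2.1 τ hτ).const_mul (c j)
  set S : ℝ := max T₀ T' + 1 with hSdef
  have hS0 : 0 < S := by
    have h1 : T₀ ≤ max T₀ T' := le_max_left _ _
    simp only [hSdef]; linarith
  have hbound : ∀ᶠ T : ℝ in Filter.atTop,
      ‖(1/(T:ℂ)) * ∫ τ in T..2*T, Complex.exp (-Complex.I * (φ τ : ℂ))‖ ≤ (3/m)/T := by
    filter_upwards [Filter.eventually_ge_atTop S] with T hTS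
    have hT0 : 0 < T := lt_of_lt_of_le hS0 hTS
    have hab : T ≤ 2*T := by linarith
    have hsub : Set.Icc T (2*T) ⊆ Set.Ioi (max T₀ T') := by
      intro τ hτ
      have h1 := hτ.1
      have h2 : max T₀ T' + 1 ≤ T := hTS
      simp only [Set.mem_Ioi]
      linarith
    have hsub₀ : Set.Icc T (2*T) ⊆ Set.Ioi T₀ :=
      hsub.trans (Set.Ioi_subset_Ioi (le_max_left _ _))
    have hsub' : Set.Icc T (2*T) ⊆ Set.Ioi T' :=
      hsub.trans (Set.Ioi_subset_Ioi (le_max_right _ _))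
    have key := osc_bound φ f g T (2*T) m hm hab
      (fun τ hτ => hφd τ (le_of_lt (hsub₀ hτ)))
      (fun τ hτ => hfd τ (hsub₀ hτ))
      (hgc.mono hsub₀)
      (by rcases hsign with h | h
          · exact Or.inl fun τ hτ => (h τ (hsub' hτ)).le
          · exact Or.inr fun τ hτ => (h τ (hsub' hτ)).le)
      (by rcases hmono with h | h
          · exact Or.inl fun τ hτ => deriv_nonneg_of_monotoneOn (hsub' hτ) h (hfd τ (hsub₀ hτ))
          · exact Or.inr fun τ hτ => deriv_nonpos_of_antitoneOn (hsub' hτ) h (hfd τ (hsub₀ hτ)))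
    rw [norm_mul]
    have hnormT : ‖(1/(T:ℂ))‖ = 1/T := by
      rw [norm_div, norm_one, Complex.norm_real, Real.norm_eq_abs, abs_of_pos hT0]
    rw [hnormT]
    calc (1/T) * ‖∫ τ in T..2*T, Complex.exp (-Complex.I * (φ τ : ℂ))‖
        ≤ (1/T) * (3/m) := by
          exact mul_le_mul_of_nonneg_left key (by positivity)
      _ = (3/m)/T := by ring
  have heq : (fun T : ℝ => (1 / (T : ℂ)) *
      ∫ τ in T..2*T, ∏ j, ∏ p ∈ P₀,
        Complex.exp (-Complex.I * (n j p : ℂ) * (γ j τ : ℂ) * (Real.log p : ℂ)))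
      = fun T : ℝ => (1/(T:ℂ)) * ∫ τ in T..2*T, Complex.exp (-Complex.I * (φ τ : ℂ)) :=
    funext fun T => by rw [hIntEq T]
  rw [heq]
  exact squeeze_zero_norm' hbound (Filter.Tendsto.div_atTop tendsto_const_nhds Filter.tendsto_id)
end
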